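/- Let ν₁, ν₂, h, ζ > 0, let σ, b, r > 0 and a ∈ ℝ satisfy b = 1, a > 0 and σ > a·r, and set c = (σ − a·r)/ζ, ρ = r·(σ − a·r)/ζ, α = a·ζ²/(σ − a·r)². If (x, y, z) : ℝ → ℝ³ is differentiable and satisfies the Lorenz-like system with parameters (r, σ, b, a), then the functions X(t) = x(t), Y(t) = c·(r − z(t)), Z(t) = c·y(t) satisfy the Glukhovsky–Dolzhansky system Ẋ = −σ·X + ζ·Z + α·Y·Z, Ẏ = ρ − Y − X·Z, Ż = −Z + X·Y. -/

import Mathlib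

/-- The linear change of variables `X = x`, `Y = c·(r − z)`, `Z = c·y` with
`c = (σ − a·r)/ζ` transforms the Lorenz-like system (with `b = 1`, `a > 0`,
`σ > a·r`) into the Glukhovsky–Dolzhansky system with parameters
`σ`, `ζ`, `ρ = r·(σ − a·r)/ζ`, `α = a·ζ²/(σ − a·r)²`. -/
theorem stmt_0 (ν₁ ν₂ h ζ σ b r a : ℝ)
    (hν₁ : 0 < ν₁) (hν₂ : 0 < ν₂) (hh : 0 < h) (hζ : 0 < ζ)
    (hσ : 0 < σ) (hb : 0 < b) (hr : 0 < r)
    (hb1 : b = 1) (ha : 0 < a) (hσar : σ > a * r)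
    (c ρ α : ℝ)
    (hc : c = (σ - a * r) / ζ)
    (hρ : ρ = r * (σ - a * r) / ζ)
    (hα : α = a * ζ ^ 2 / (σ - a * r) ^ 2)
    (x y z : ℝ → ℝ)
    (hx : ∀ t, HasDerivAt x (-σ * (x t - y t) - a * y t * z t) t)
    (hy : ∀ t, HasDerivAt y (r * x t - y t - x t * z t) t)
    (hz : ∀ t, HasDerivAt z (-b * z t + x t * y t) t) :
    (∀ t, HasDerivAt (fun s => x s)
      (-σ * x t + ζ * (c * y t) + α * (c * (r - z t)) * (c * y t)) t) ∧
    (∀ t, HasDerivAt (fun s => c * (r - z s))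
      (ρ - c * (r - z t) - x t * (c * y t)) t) ∧
    (∀ t, HasDerivAt (fun s => c * y s)
      (-(c * y t) + x t * (c * (r - z t))) t) := by
  have hζ' : ζ ≠ 0 := ne_of_gt hζ
  have hs : σ - a * r ≠ 0 := ne_of_gt (by linarith)
  subst hb1 hc hρ hα
  refine ⟨fun t => ?_, fun t => ?_, fun t => ?_⟩
  · have := hx t
    convert this using 1
    field_simp
    ring
  · have := ((hz t).const_sub r).const_mul ((σ - a * r) / ζ)
    convert this using 1
    · rfl
    · rfl
    ring
  · have := (hy t).const_mul ((σ - a * r) / ζ)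
    convert this using 1
    · rfl
    · rfl
    ring
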